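/- Let d ≥ 2, q ∈ ℝ, 0 < R0 < R1, and let χ be an admissible transition function for (R0, R1). Define α : ℝ^d \ {0} → ℝ by 2α(x) := 1 + (d−q−1) χ(r) + ((r² − x_d²)/r) χ′(r), where r := |x| and x_d := x·e_d. Then α is twice continuously differentiable on ℝ^d \ {0} and, for every x ≠ 0, 2 Δα(x) = χ′(r) [ ((d−1)(d−q) − 2)/r + ((d+1)/r)(x_d²/r²) ] + χ″(r) [ 2d − q − (d+1) x_d²/r² ] + χ‴(r) (r² − x_d²)/r. -/

import Mathlib

open scoped BigOperators

noncomputable section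

/-- `χ : ℝ → ℝ` is an *admissible transition function* for `(R0, R1)`. -/
structure IsAdmissibleTransition (R0 R1 : ℝ) (χ : ℝ → ℝ) : Prop where
  contDiffOn : ContDiffOn ℝ 3 χ (Set.Ici 0)
  eq_zero : ∀ r, 0 ≤ r → r ≤ R0 → χ r = 0
  eq_one : ∀ r, R1 ≤ r → χ r = 1
  mem_Ioo : ∀ r, R0 < r → r < R1 → χ r ∈ Set.Ioo (0 : ℝ) 1
  deriv_nonneg : ∀ r : ℝ, 0 < r → 0 ≤ r * deriv χ r
  deriv_lt_four : ∀ r : ℝ, 0 < r → r * deriv χ r < 4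

/-- Partial derivative of a real-valued function in the `i`-th coordinate direction. -/
def rpd (d : ℕ) (f : EuclideanSpace ℝ (Fin d) → ℝ) (i : Fin d)
    (x : EuclideanSpace ℝ (Fin d)) : ℝ :=
  fderiv ℝ f x (EuclideanSpace.single i 1)

/-- Laplacian (sum of second partial derivatives) of a real-valued function. -/
def rlap (d : ℕ) (f : EuclideanSpace ℝ (Fin d) → ℝ) (x : EuclideanSpace ℝ (Fin d)) : ℝ :=
  ∑ i, rpd d (rpd d f i) i x

/-- The multiplier coefficient `α`, defined by
`2α(x) = 1 + (d−q−1)χ(r) + ((r² − x_d²)/r)χ′(r)`, `r = |x|`. -/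
def alphaFun (d : ℕ) (ld : Fin d) (q : ℝ) (χ : ℝ → ℝ)
    (x : EuclideanSpace ℝ (Fin d)) : ℝ :=
  (1 + ((d : ℝ) - q - 1) * χ ‖x‖ + ((‖x‖ ^ 2 - (x ld) ^ 2) / ‖x‖) * deriv χ ‖x‖) / 2

namespace AlphaAux


/-! ### Generic derivative lemmas -/

variable {E : Type*} [NormedAddCommGroup E] [InnerProductSpace ℝ E]

lemma norm_hasFDerivAt {x : E} (hx : x ≠ 0) :
    HasFDerivAt (fun y : E => ‖y‖) ((‖x‖)⁻¹ • innerSL ℝ x) x := by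
  have h2 : HasFDerivAt (fun y : E => ‖y‖ ^ 2) (2 • (innerSL ℝ x)) x := by
    simpa using (hasFDerivAt_id x).norm_sq
  have hs : (‖x‖ ^ 2 : ℝ) ≠ 0 := pow_ne_zero _ (norm_ne_zero_iff.mpr hx)
  have h3 := (Real.hasDerivAt_sqrt hs).comp_hasFDerivAt x h2
  have key : (fun y : E => Real.sqrt (‖y‖ ^ 2)) = fun y : E => ‖y‖ := by
    funext y; rw [Real.sqrt_sq (norm_nonneg y)]
  rw [Function.comp_def, key] at h3
  rw [Real.sqrt_sq (norm_nonneg x)] at h3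
  have h4 : (1 / (2 * ‖x‖)) • (2 • (innerSL ℝ x)) = ‖x‖⁻¹ • innerSL ℝ x := by
    ext y
    have hn : ‖x‖ ≠ 0 := norm_ne_zero_iff.mpr hx
    simp only [ContinuousLinearMap.coe_smul', Pi.smul_apply, smul_eq_mul]
    rw [nsmul_eq_mul]
    push_cast
    field_simp
  rwa [h4] at h3

lemma comp_norm_hasFDerivAt {ψ : ℝ → ℝ} {p : ℝ} {x : E} (hx : x ≠ 0)
    (hψ : HasDerivAt ψ p ‖x‖) :
    HasFDerivAt (fun y : E => ψ ‖y‖) ((p / ‖x‖) • innerSL ℝ x) x := by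
  have := hψ.comp_hasFDerivAt x (norm_hasFDerivAt hx)
  refine this.congr_fderiv ?_
  rw [smul_smul, div_eq_mul_inv]

variable {d : ℕ}

lemma sq_coord_hasFDerivAt (ld : Fin d) (x : EuclideanSpace ℝ (Fin d)) :
    HasFDerivAt (fun y : EuclideanSpace ℝ (Fin d) => (y ld)^2)
      ((2 * x ld) • (EuclideanSpace.proj ld : EuclideanSpace ℝ (Fin d) →L[ℝ] ℝ)) x := by
  have h := (EuclideanSpace.proj (𝕜 := ℝ) ld).hasFDerivAt (x := x)
  have h2 := h.mul h
  have e : (fun y : EuclideanSpace ℝ (Fin d) => (y ld)^2)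
      = fun y => (EuclideanSpace.proj (𝕜 := ℝ) ld) y * (EuclideanSpace.proj (𝕜 := ℝ) ld) y := by
    funext y; simp [sq]
  rw [e]
  refine h2.congr_fderiv ?_
  ext v
  simp
  ring

lemma coord_hasFDerivAt (i : Fin d) (x : EuclideanSpace ℝ (Fin d)) :
    HasFDerivAt (fun y : EuclideanSpace ℝ (Fin d) => y i)
      (EuclideanSpace.proj i : EuclideanSpace ℝ (Fin d) →L[ℝ] ℝ) x := by
  have h := (EuclideanSpace.proj (𝕜 := ℝ) i).hasFDerivAt (x := x)
  have e : (fun y : EuclideanSpace ℝ (Fin d) => y i)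
      = ⇑(EuclideanSpace.proj (𝕜 := ℝ) i) := by
    funext y; simp
  rw [e]; exact h

lemma L1 (ld : Fin d) {a b : ℝ → ℝ} {a' b' : ℝ} {x : EuclideanSpace ℝ (Fin d)} (hx : x ≠ 0)
    (ha : HasDerivAt a a' ‖x‖) (hb : HasDerivAt b b' ‖x‖) :
    HasFDerivAt (fun y : EuclideanSpace ℝ (Fin d) => a ‖y‖ + (y ld)^2 * b ‖y‖)
      (((a' + (x ld)^2 * b') / ‖x‖) • innerSL ℝ x
        + (2 * x ld * b ‖x‖) • (EuclideanSpace.proj ld : EuclideanSpace ℝ (Fin d) →L[ℝ] ℝ)) x := by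
  have hA := comp_norm_hasFDerivAt hx ha
  have hB := comp_norm_hasFDerivAt hx hb
  have hu := sq_coord_hasFDerivAt ld x
  have h := hA.add (hu.mul hB)
  refine h.congr_fderiv ?_
  ext v
  have hn : ‖x‖ ≠ 0 := norm_ne_zero_iff.mpr hx
  simp only [ContinuousLinearMap.add_apply, ContinuousLinearMap.coe_smul', Pi.smul_apply,
    smul_eq_mul]
  field_simp
  ring

lemma innerSL_single (x : EuclideanSpace ℝ (Fin d)) (i : Fin d) :
    (innerSL ℝ x) (EuclideanSpace.single i (1:ℝ)) = x i := by
  simp [EuclideanSpace.inner_single_right, real_inner_comm]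

lemma proj_single (i j : Fin d) :
    (EuclideanSpace.proj (𝕜 := ℝ) j) (EuclideanSpace.single i (1:ℝ))
      = if j = i then 1 else 0 := by
  simp [EuclideanSpace.single_apply]

lemma sum_sq_coord (x : EuclideanSpace ℝ (Fin d)) : ∑ i, (x i)^2 = ‖x‖^2 := by
  rw [EuclideanSpace.norm_eq, Real.sq_sqrt (by positivity)]
  simp [Real.norm_eq_abs, sq_abs]

/-! ### Scalar building blocks -/

def a0 (c : ℝ) (χ : ℝ → ℝ) (s : ℝ) : ℝ := (1 + c * χ s + s * deriv χ s) / 2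
def gf (χ : ℝ → ℝ) (s : ℝ) : ℝ := -(deriv χ s) / (2*s)
def Pa (c : ℝ) (χ : ℝ → ℝ) (s : ℝ) : ℝ := ((c+1) * deriv χ s + s * deriv (deriv χ) s) / 2
def Pg (χ : ℝ → ℝ) (s : ℝ) : ℝ := -(deriv (deriv χ) s)/(2*s) + deriv χ s/(2*s^2)
def a1 (c : ℝ) (χ : ℝ → ℝ) (s : ℝ) : ℝ := Pa c χ s / s
def b1 (χ : ℝ → ℝ) (s : ℝ) : ℝ := Pg χ s / s
def Qa (c : ℝ) (χ : ℝ → ℝ) (s : ℝ) : ℝ :=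
  ((((c+1) * deriv (deriv χ) s + (deriv (deriv χ) s + s * deriv (deriv (deriv χ)) s))/2) * s
    - Pa c χ s) / s^2
def Qg (χ : ℝ → ℝ) (s : ℝ) : ℝ :=
  (-(deriv (deriv (deriv χ)) s)/(2*s) + (deriv (deriv χ) s)/(2*s^2))
    + ((deriv (deriv χ) s)/(2*s^2) - (deriv χ s)/(s^3))
def Qb (χ : ℝ → ℝ) (s : ℝ) : ℝ := (Qg χ s * s - Pg χ s) / s^2

variable {χ : ℝ → ℝ} {c s : ℝ}

lemma hasDerivAt_a0 (h1 : DifferentiableAt ℝ χ s) (h2 : DifferentiableAt ℝ (deriv χ) s) :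
    HasDerivAt (a0 c χ) (Pa c χ s) s := by
  have h := (((h1.hasDerivAt.const_mul c).const_add 1).add
    ((hasDerivAt_id s).mul h2.hasDerivAt)).div_const 2
  simp only [id_eq] at h
  refine h.congr_deriv ?_
  unfold Pa; ring

lemma hasDerivAt_gf (hs : s ≠ 0) (h2 : DifferentiableAt ℝ (deriv χ) s) :
    HasDerivAt (gf χ) (Pg χ s) s := by
  have hden : HasDerivAt (fun t : ℝ => 2 * t) 2 s := by
    simpa using (hasDerivAt_id s).const_mul 2
  have h := h2.hasDerivAt.neg.div hden (by simpa using hs)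
  refine h.congr_deriv ?_
  unfold Pg
  field_simp
  simp only [Pi.neg_apply]
  ring

lemma hasDerivAt_Pa (h2 : DifferentiableAt ℝ (deriv χ) s)
    (h3 : DifferentiableAt ℝ (deriv (deriv χ)) s) :
    HasDerivAt (Pa c χ)
      (((c+1) * deriv (deriv χ) s + (deriv (deriv χ) s + s * deriv (deriv (deriv χ)) s))/2) s := by
  have h := ((h2.hasDerivAt.const_mul (c+1)).add
    ((hasDerivAt_id s).mul h3.hasDerivAt)).div_const 2
  simp only [id_eq] at h
  refine h.congr_deriv ?_
  ring

lemma hasDerivAt_a1 (hs : s ≠ 0) (h2 : DifferentiableAt ℝ (deriv χ) s)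
    (h3 : DifferentiableAt ℝ (deriv (deriv χ)) s) :
    HasDerivAt (a1 c χ) (Qa c χ s) s := by
  have h := (hasDerivAt_Pa (c := c) h2 h3).div (hasDerivAt_id s) hs
  simp only [id_eq] at h
  refine h.congr_deriv ?_
  unfold Qa
  field_simp

lemma hasDerivAt_Pg (hs : s ≠ 0) (h2 : DifferentiableAt ℝ (deriv χ) s)
    (h3 : DifferentiableAt ℝ (deriv (deriv χ)) s) :
    HasDerivAt (Pg χ) (Qg χ s) s := by
  have hden : HasDerivAt (fun t : ℝ => 2 * t) 2 s := by
    simpa using (hasDerivAt_id s).const_mul 2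
  have hden2 : HasDerivAt (fun t : ℝ => 2 * t^2) (2 * (2*s)) s := by
    simpa using ((hasDerivAt_pow 2 s).const_mul 2)
  have hA := h3.hasDerivAt.neg.div hden (by simpa using hs)
  have hB := h2.hasDerivAt.div hden2 (by simp [hs])
  have h := hA.add hB
  refine h.congr_deriv ?_
  unfold Qg
  field_simp
  simp only [Pi.neg_apply]
  ring

lemma hasDerivAt_b1 (hs : s ≠ 0) (h2 : DifferentiableAt ℝ (deriv χ) s)
    (h3 : DifferentiableAt ℝ (deriv (deriv χ)) s) :
    HasDerivAt (b1 χ) (Qb χ s) s := by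
  have h := (hasDerivAt_Pg hs h2 h3).div (hasDerivAt_id s) hs
  simp only [id_eq] at h
  refine h.congr_deriv ?_
  unfold Qb
  field_simp




lemma chi_peel {χ : ℝ → ℝ} (hχ3 : ContDiffOn ℝ 3 χ (Set.Ici 0)) :
    ContDiffOn ℝ 2 (deriv χ) (Set.Ioi 0) ∧ ContDiffOn ℝ 1 (deriv (deriv χ)) (Set.Ioi 0) := by
  have h3 : ContDiffOn ℝ 3 χ (Set.Ioi 0) := hχ3.mono Set.Ioi_subset_Ici_self
  have e3 : (3 : WithTop ℕ∞) = 2 + 1 := by norm_num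
  have h2 : ContDiffOn ℝ 2 (deriv χ) (Set.Ioi 0) :=
    ((contDiffOn_succ_iff_deriv_of_isOpen isOpen_Ioi).1 (e3 ▸ h3)).2.2
  have e2 : (2 : WithTop ℕ∞) = 1 + 1 := by norm_num
  have h1 : ContDiffOn ℝ 1 (deriv (deriv χ)) (Set.Ioi 0) :=
    ((contDiffOn_succ_iff_deriv_of_isOpen isOpen_Ioi).1 (e2 ▸ h2)).2.2
  exact ⟨h2, h1⟩

lemma chi_diff {χ : ℝ → ℝ} (hχ3 : ContDiffOn ℝ 3 χ (Set.Ici 0)) {t : ℝ} (ht : 0 < t) :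
    DifferentiableAt ℝ χ t ∧ DifferentiableAt ℝ (deriv χ) t ∧
      DifferentiableAt ℝ (deriv (deriv χ)) t := by
  obtain ⟨h2, h1⟩ := chi_peel hχ3
  have h3 : ContDiffOn ℝ 3 χ (Set.Ioi 0) := hχ3.mono Set.Ioi_subset_Ici_self
  refine ⟨?_, ?_, ?_⟩
  · exact ((h3.differentiableOn (by norm_num)).differentiableAt (Ioi_mem_nhds ht))
  · exact ((h2.differentiableOn (by norm_num)).differentiableAt (Ioi_mem_nhds ht))
  · exact ((h1.differentiableOn (by norm_num)).differentiableAt (Ioi_mem_nhds ht))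


set_option maxHeartbeats 1000000 in
theorem main (d : ℕ) (ld : Fin d) (q : ℝ) (χ : ℝ → ℝ)
    (hχ3 : ContDiffOn ℝ 3 χ (Set.Ici 0)) :
    ContDiffOn ℝ 2 (alphaFun d ld q χ)
      {x : EuclideanSpace ℝ (Fin d) | x ≠ 0} ∧
    (∀ x : EuclideanSpace ℝ (Fin d), x ≠ 0 →
      2 * rlap d (alphaFun d ld q χ) x
        = deriv χ ‖x‖ * ((((d : ℝ) - 1) * ((d : ℝ) - q) - 2) / ‖x‖
              + (((d : ℝ) + 1) / ‖x‖) * ((x ld) ^ 2 / ‖x‖ ^ 2))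
          + deriv (deriv χ) ‖x‖ * (2 * (d : ℝ) - q
              - ((d : ℝ) + 1) * (x ld) ^ 2 / ‖x‖ ^ 2)
          + deriv (deriv (deriv χ)) ‖x‖ * ((‖x‖ ^ 2 - (x ld) ^ 2) / ‖x‖)) := by
  obtain ⟨hC2, hC1⟩ := chi_peel hχ3
  have hC3 : ContDiffOn ℝ 3 χ (Set.Ioi 0) := hχ3.mono Set.Ioi_subset_Ici_self
  set c : ℝ := (d : ℝ) - q - 1 with hc
  -- the smooth rewriting of alphaFun away from 0
  have hform : ∀ y : EuclideanSpace ℝ (Fin d), y ≠ 0 →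
      alphaFun d ld q χ y = a0 c χ ‖y‖ + (y ld)^2 * gf χ ‖y‖ := by
    intro y hy
    have hn : ‖y‖ ≠ 0 := norm_ne_zero_iff.mpr hy
    unfold alphaFun a0 gf
    field_simp
    ring
  constructor
  · -- smoothness
    intro x hx
    have hx' : x ≠ 0 := hx
    have hn0 : ‖x‖ ≠ 0 := norm_ne_zero_iff.mpr hx'
    have hr : (0:ℝ) < ‖x‖ := norm_pos_iff.mpr hx'
    have hN : ContDiffAt ℝ 2 (fun y : EuclideanSpace ℝ (Fin d) => ‖y‖) x :=
      contDiffAt_norm ℝ hx'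
    have hχat : ContDiffAt ℝ 2 χ ‖x‖ :=
      (hC3.contDiffAt (Ioi_mem_nhds hr)).of_le (by norm_num)
    have hχ'at : ContDiffAt ℝ 2 (deriv χ) ‖x‖ := hC2.contDiffAt (Ioi_mem_nhds hr)
    have hproj : ContDiffAt ℝ 2 (fun y : EuclideanSpace ℝ (Fin d) => y ld) x :=
      (EuclideanSpace.proj (𝕜 := ℝ) ld).contDiff.contDiffAt
    refine ContDiffAt.contDiffWithinAt ?_
    exact ((contDiffAt_const.add (contDiffAt_const.mul (hχat.comp x hN))).add
      ((((hN.pow 2).sub (hproj.pow 2)).div hN hn0).mul (hχ'at.comp x hN))).div_const 2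
  · intro x hx
    -- ## the Laplacian computation
    have hu0 : ∀ y : EuclideanSpace ℝ (Fin d), y ≠ 0 → (0:ℝ) < ‖y‖ := fun y hy =>
      norm_pos_iff.mpr hy
    have hfd1 : ∀ y : EuclideanSpace ℝ (Fin d), y ≠ 0 →
        HasFDerivAt (alphaFun d ld q χ)
          (((Pa c χ ‖y‖ + (y ld)^2 * Pg χ ‖y‖) / ‖y‖) • innerSL ℝ y
            + (2 * y ld * gf χ ‖y‖) • (EuclideanSpace.proj ld :
                EuclideanSpace ℝ (Fin d) →L[ℝ] ℝ)) y := by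
      intro y hy
      have hr := hu0 y hy
      obtain ⟨D1, D2, D3⟩ := chi_diff hχ3 hr
      have hL := L1 ld hy (hasDerivAt_a0 (c := c) D1 D2) (hasDerivAt_gf hr.ne' D2)
      exact hL.congr_of_eventuallyEq
        (Filter.eventuallyEq_of_mem (isOpen_compl_singleton.mem_nhds hy)
          (fun z hz => hform z hz))
    set F : Fin d → EuclideanSpace ℝ (Fin d) → ℝ := fun i y =>
      (a1 c χ ‖y‖ + (y ld)^2 * b1 χ ‖y‖) * y i
        + (if ld = i then 2 * y ld * gf χ ‖y‖ else 0) with hF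
    have rpd1 : ∀ (i : Fin d) (y : EuclideanSpace ℝ (Fin d)), y ≠ 0 →
        rpd d (alphaFun d ld q χ) i y = F i y := by
      intro i y hy
      have hn : ‖y‖ ≠ 0 := (hu0 y hy).ne'
      unfold rpd
      rw [(hfd1 y hy).fderiv]
      simp only [hF, ContinuousLinearMap.add_apply, ContinuousLinearMap.coe_smul',
        Pi.smul_apply, smul_eq_mul, innerSL_single, proj_single]
      unfold a1 b1
      by_cases h : ld = i
      · simp only [if_pos h]
        ring
      · simp only [if_neg h]
        ring
    -- now at the point x
    have hr : (0:ℝ) < ‖x‖ := hu0 x hx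
    have hn : ‖x‖ ≠ 0 := hr.ne'
    obtain ⟨D1, D2, D3⟩ := chi_diff hχ3 hr
    set K : EuclideanSpace ℝ (Fin d) →L[ℝ] ℝ :=
      ((Qa c χ ‖x‖ + (x ld)^2 * Qb χ ‖x‖) / ‖x‖) • innerSL ℝ x
        + (2 * x ld * b1 χ ‖x‖) • (EuclideanSpace.proj ld :
            EuclideanSpace ℝ (Fin d) →L[ℝ] ℝ) with hK
    have hk : HasFDerivAt (fun y : EuclideanSpace ℝ (Fin d) =>
        a1 c χ ‖y‖ + (y ld)^2 * b1 χ ‖y‖) K x :=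
      L1 ld hx (hasDerivAt_a1 hn D2 D3) (hasDerivAt_b1 hn D2 D3)
    have step : ∀ i : Fin d, rpd d (rpd d (alphaFun d ld q χ) i) i x
        = (a1 c χ ‖x‖ + (x ld)^2 * b1 χ ‖x‖)
          + ((Qa c χ ‖x‖ + (x ld)^2 * Qb χ ‖x‖) / ‖x‖) * (x i)^2
          + (if ld = i then
              (2*(x ld)^2 * b1 χ ‖x‖ + 2*(x ld)^2*(Pg χ ‖x‖ / ‖x‖) + 2 * gf χ ‖x‖)
            else 0) := by
      intro i
      have hEq : rpd d (alphaFun d ld q χ) i =ᶠ[nhds x] F i :=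
        Filter.eventuallyEq_of_mem (isOpen_compl_singleton.mem_nhds hx)
          (fun z hz => rpd1 i z hz)
      have key : rpd d (rpd d (alphaFun d ld q χ) i) i x
          = fderiv ℝ (F i) x (EuclideanSpace.single i 1) := by
        show fderiv ℝ (rpd d (alphaFun d ld q χ) i) x (EuclideanSpace.single i 1) = _
        rw [hEq.fderiv_eq]
      rw [key]
      by_cases hi : ld = i
      · subst hi
        have hFeq : F ld = (fun y : EuclideanSpace ℝ (Fin d) =>
            (a1 c χ ‖y‖ + (y ld)^2 * b1 χ ‖y‖) * y ld + 2 * y ld * gf χ ‖y‖) := by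
          funext y; simp [hF]
        have hsum : HasFDerivAt (fun y : EuclideanSpace ℝ (Fin d) =>
            (a1 c χ ‖y‖ + (y ld)^2 * b1 χ ‖y‖) * y ld + 2 * y ld * gf χ ‖y‖)
            (((a1 c χ ‖x‖ + (x ld)^2 * b1 χ ‖x‖) • (EuclideanSpace.proj ld :
                EuclideanSpace ℝ (Fin d) →L[ℝ] ℝ) + (x ld) • K)
              + ((2 * x ld) • ((Pg χ ‖x‖ / ‖x‖) • innerSL ℝ x)
                + gf χ ‖x‖ • ((2:ℝ) • (EuclideanSpace.proj ld :
                    EuclideanSpace ℝ (Fin d) →L[ℝ] ℝ)))) x :=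
          HasFDerivAt.add (hk.mul (coord_hasFDerivAt ld x))
            (((coord_hasFDerivAt ld x).const_mul (2:ℝ)).mul
              (comp_norm_hasFDerivAt hx (hasDerivAt_gf hn D2)))
        rw [hFeq, hsum.fderiv]
        simp only [hK, ContinuousLinearMap.add_apply, ContinuousLinearMap.coe_smul',
          Pi.smul_apply, smul_eq_mul, innerSL_single, proj_single, if_pos rfl,
          eq_self_iff_true, if_true]
        ring
      · have hFeq : F i = (fun y : EuclideanSpace ℝ (Fin d) =>
            (a1 c χ ‖y‖ + (y ld)^2 * b1 χ ‖y‖) * y i) := by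
          funext y; simp [hF, hi]
        have hone : HasFDerivAt (fun y : EuclideanSpace ℝ (Fin d) =>
            (a1 c χ ‖y‖ + (y ld)^2 * b1 χ ‖y‖) * y i)
            ((a1 c χ ‖x‖ + (x ld)^2 * b1 χ ‖x‖) • (EuclideanSpace.proj i :
                EuclideanSpace ℝ (Fin d) →L[ℝ] ℝ) + (x i) • K) x :=
          hk.mul (coord_hasFDerivAt i x)
        rw [hFeq, hone.fderiv]
        simp only [hK, ContinuousLinearMap.add_apply, ContinuousLinearMap.coe_smul',
          Pi.smul_apply, smul_eq_mul, innerSL_single, proj_single, if_neg hi,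
          eq_self_iff_true, if_true]
        try ring
    have hsum2 : rlap d (alphaFun d ld q χ) x
        = (d : ℝ) * (a1 c χ ‖x‖ + (x ld)^2 * b1 χ ‖x‖)
          + ((Qa c χ ‖x‖ + (x ld)^2 * Qb χ ‖x‖) / ‖x‖) * ‖x‖^2
          + (2*(x ld)^2 * b1 χ ‖x‖ + 2*(x ld)^2*(Pg χ ‖x‖ / ‖x‖) + 2 * gf χ ‖x‖) := by
      unfold rlap
      rw [Finset.sum_congr rfl (fun i _ => step i)]
      rw [Finset.sum_add_distrib, Finset.sum_add_distrib, Finset.sum_const,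
        Finset.sum_ite_eq, ← Finset.mul_sum, sum_sq_coord]
      simp only [Finset.card_univ, Fintype.card_fin, nsmul_eq_mul, Finset.mem_univ, if_true]
      try ring
    rw [hsum2, hc]
    unfold a1 b1 Qa Qb Pa Pg Qg gf
    field_simp
    ring
end AlphaAux

/-- For `d ≥ 2`, `q ∈ ℝ` and an admissible transition function `χ` for `(R0, R1)`,
the function `α` with `2α(x) = 1 + (d−q−1)χ(r) + ((r² − x_d²)/r)χ′(r)` is twice
continuously differentiable on `ℝ^d \ {0}`, and for every `x ≠ 0`:
`2Δα(x) = χ′(r)[((d−1)(d−q) − 2)/r + ((d+1)/r)(x_d²/r²)]`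
`+ χ″(r)[2d − q − (d+1)x_d²/r²] + χ‴(r)(r² − x_d²)/r`. -/
theorem alphaFun_laplacian (d : ℕ) (hd : 2 ≤ d) (q : ℝ) (R0 R1 : ℝ) (hR0 : 0 < R0)
    (hR01 : R0 < R1) (χ : ℝ → ℝ) (hχ : IsAdmissibleTransition R0 R1 χ) :
    ContDiffOn ℝ 2 (alphaFun d ⟨d - 1, by omega⟩ q χ)
      {x : EuclideanSpace ℝ (Fin d) | x ≠ 0} ∧
    (∀ x : EuclideanSpace ℝ (Fin d), x ≠ 0 →
      2 * rlap d (alphaFun d ⟨d - 1, by omega⟩ q χ) x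
        = deriv χ ‖x‖ * ((((d : ℝ) - 1) * ((d : ℝ) - q) - 2) / ‖x‖
              + (((d : ℝ) + 1) / ‖x‖) * ((x ⟨d - 1, by omega⟩) ^ 2 / ‖x‖ ^ 2))
          + deriv (deriv χ) ‖x‖ * (2 * (d : ℝ) - q
              - ((d : ℝ) + 1) * (x ⟨d - 1, by omega⟩) ^ 2 / ‖x‖ ^ 2)
          + deriv (deriv (deriv χ)) ‖x‖ * ((‖x‖ ^ 2 - (x ⟨d - 1, by omega⟩) ^ 2) / ‖x‖)) := by
  exact AlphaAux.main d ⟨d - 1, by omega⟩ q χ hχ.contDiffOn
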